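/- Let γ > 1, α > 0, and q = (α+1)γ/((α+1)γ - α). Let Ω be a finite measure space and m, w : Ω → [0,∞) measurable with ∫ m^{α+1} dμ ≤ C₁ and ∫ w^γ m dμ ≤ C₂. Then m w^{γ-1} ∈ L^q(Ω) with ‖m w^{γ-1}‖_{L^q} ≤ C₁^{1/(γ(α+1))} · C₂^{(γ-1)/γ}. -/

import Mathlib

open MeasureTheory
open scoped ENNReal NNReal

/-- Quantitative drift estimate: ∫ m^{α+1} ≤ C₁ and ∫ w^γ m ≤ C₂ imply
m w^{γ-1} ∈ L^q with the stated bound, where q = (α+1)γ/((α+1)γ-α). -/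
theorem stmt_8 (γ α C₁ C₂ : ℝ) (hγ : 1 < γ) (hα : 0 < α) (hC₁ : 0 ≤ C₁) (hC₂ : 0 ≤ C₂)
    {Ω : Type*} [MeasurableSpace Ω] (μ : Measure Ω) [IsFiniteMeasure μ]
    (m w : Ω → ℝ) (hm : Measurable m) (hw : Measurable w)
    (hm0 : ∀ x, 0 ≤ m x) (hw0 : ∀ x, 0 ≤ w x)
    (h1 : ∫⁻ x, ENNReal.ofReal (m x ^ (α + 1)) ∂μ ≤ ENNReal.ofReal C₁)
    (h2 : ∫⁻ x, ENNReal.ofReal (w x ^ γ * m x) ∂μ ≤ ENNReal.ofReal C₂) :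
    MemLp (fun x => m x * w x ^ (γ - 1)) (ENNReal.ofReal ((α + 1) * γ / ((α + 1) * γ - α))) μ ∧
    eLpNorm (fun x => m x * w x ^ (γ - 1)) (ENNReal.ofReal ((α + 1) * γ / ((α + 1) * γ - α))) μ
      ≤ ENNReal.ofReal (C₁ ^ (1 / (γ * (α + 1))) * C₂ ^ ((γ - 1) / γ)) := by
  have hγ0 : (0:ℝ) < γ := by linarith
  have hγ1 : (0:ℝ) < γ - 1 := by linarith
  have hα1 : (0:ℝ) < α + 1 := by linarith
  have hden : (0:ℝ) < (α + 1) * γ - α := by nlinarith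
  set q : ℝ := (α + 1) * γ / ((α + 1) * γ - α) with hqdef
  have hq0 : 0 < q := div_pos (by positivity) hden
  set A : ℝ := q * (γ - 1) / γ with hAdef
  set B : ℝ := q / (γ * (α + 1)) with hBdef
  have hA0 : 0 < A := by positivity
  have hB0 : 0 < B := by positivity
  have hAB : A + B = 1 := by
    rw [hAdef, hBdef, hqdef]
    field_simp
    ring
  have hA1 : A < 1 := by linarith
  have hconj : (A⁻¹).HolderConjugate (B⁻¹) := by
    rw [Real.holderConjugate_iff]
    constructor
    · exact (one_lt_inv_iff₀).2 ⟨hA0, hA1⟩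
    · rw [inv_inv, inv_inv]; exact hAB
  have hexp1 : γ * A = (γ - 1) * q := by
    rw [hAdef]; field_simp
  have hexp2 : A + (α + 1) * B = q := by
    rw [hAdef, hBdef]; field_simp; ring
  -- pointwise identity
  have hkey : ∀ x, ((‖m x * w x ^ (γ - 1)‖₊ : ℝ≥0∞)) ^ q
      = ENNReal.ofReal (w x ^ γ * m x) ^ A * ENNReal.ofReal (m x ^ (α + 1)) ^ B := by
    intro x
    have hwx := hw0 x
    have hmx := hm0 x
    rw [← enorm_eq_nnnorm, Real.enorm_eq_ofReal (mul_nonneg hmx (Real.rpow_nonneg hwx _)),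
      ENNReal.ofReal_rpow_of_nonneg (mul_nonneg hmx (Real.rpow_nonneg hwx _)) hq0.le,
      ENNReal.ofReal_rpow_of_nonneg (mul_nonneg (Real.rpow_nonneg hwx _) hmx) hA0.le,
      ENNReal.ofReal_rpow_of_nonneg (Real.rpow_nonneg hmx _) hB0.le,
      ← ENNReal.ofReal_mul (by positivity)]
    congr 1
    rw [Real.mul_rpow hmx (Real.rpow_nonneg hwx _),
      Real.mul_rpow (Real.rpow_nonneg hwx _) hmx,
      ← Real.rpow_mul hwx, ← Real.rpow_mul hwx, ← Real.rpow_mul hmx,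
      hexp1, mul_assoc,
      ← Real.rpow_add_of_nonneg hmx hA0.le (by positivity),
      hexp2]
    rw [mul_comm ((γ : ℝ) - 1) q, mul_comm]
  -- measurability
  have hFm : Measurable fun x => ENNReal.ofReal (w x ^ γ * m x) ^ A :=
    ((hw.pow measurable_const).mul hm).ennreal_ofReal.pow_const _
  have hGm : Measurable fun x => ENNReal.ofReal (m x ^ (α + 1)) ^ B :=
    (hm.pow measurable_const).ennreal_ofReal.pow_const _
  -- Hölder
  have holder := ENNReal.lintegral_mul_le_Lp_mul_Lq μ hconj hFm.aemeasurable hGm.aemeasurable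
  simp only [Pi.mul_apply, ← ENNReal.rpow_mul, mul_inv_cancel₀ hA0.ne',
    mul_inv_cancel₀ hB0.ne', ENNReal.rpow_one, one_div, inv_inv] at holder
  have hint : (∫⁻ x, (‖m x * w x ^ (γ - 1)‖₊ : ℝ≥0∞) ^ q ∂μ)
      ≤ ENNReal.ofReal C₂ ^ A * ENNReal.ofReal C₁ ^ B := by
    calc (∫⁻ x, (‖m x * w x ^ (γ - 1)‖₊ : ℝ≥0∞) ^ q ∂μ)
        = ∫⁻ x, ENNReal.ofReal (w x ^ γ * m x) ^ A * ENNReal.ofReal (m x ^ (α + 1)) ^ B ∂μ :=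
          lintegral_congr fun x => hkey x
      _ ≤ (∫⁻ x, ENNReal.ofReal (w x ^ γ * m x) ∂μ) ^ A
            * (∫⁻ x, ENNReal.ofReal (m x ^ (α + 1)) ∂μ) ^ B := holder
      _ ≤ ENNReal.ofReal C₂ ^ A * ENNReal.ofReal C₁ ^ B :=
          mul_le_mul' (ENNReal.rpow_le_rpow h2 hA0.le) (ENNReal.rpow_le_rpow h1 hB0.le)
  have hp_ne0 : ENNReal.ofReal q ≠ 0 := by
    simp [ENNReal.ofReal_eq_zero, not_le, hq0]
  have hp_ne_top : ENNReal.ofReal q ≠ ∞ := ENNReal.ofReal_ne_top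
  have hAq : A * (1 / q) = (γ - 1) / γ := by
    rw [hAdef]; field_simp
  have hBq : B * (1 / q) = 1 / (γ * (α + 1)) := by
    rw [hBdef]; field_simp
  have hbound : eLpNorm (fun x => m x * w x ^ (γ - 1)) (ENNReal.ofReal q) μ
      ≤ ENNReal.ofReal (C₁ ^ (1 / (γ * (α + 1))) * C₂ ^ ((γ - 1) / γ)) := by
    rw [eLpNorm_eq_lintegral_rpow_enorm_toReal hp_ne0 hp_ne_top,
      ENNReal.toReal_ofReal hq0.le]
    calc (∫⁻ x, (‖m x * w x ^ (γ - 1)‖₊ : ℝ≥0∞) ^ q ∂μ) ^ (1 / q)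
        ≤ (ENNReal.ofReal C₂ ^ A * ENNReal.ofReal C₁ ^ B) ^ (1 / q) :=
          ENNReal.rpow_le_rpow hint (by positivity)
      _ = ENNReal.ofReal C₂ ^ ((γ - 1) / γ) * ENNReal.ofReal C₁ ^ (1 / (γ * (α + 1))) := by
          rw [ENNReal.mul_rpow_of_nonneg _ _ (by positivity),
            ← ENNReal.rpow_mul, ← ENNReal.rpow_mul, hAq, hBq]
      _ = ENNReal.ofReal (C₁ ^ (1 / (γ * (α + 1))) * C₂ ^ ((γ - 1) / γ)) := by
          rw [ENNReal.ofReal_rpow_of_nonneg hC₂ (by positivity),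
            ENNReal.ofReal_rpow_of_nonneg hC₁ (by positivity),
            ← ENNReal.ofReal_mul (by positivity), mul_comm]
  refine ⟨⟨(hm.mul (hw.pow measurable_const)).aestronglyMeasurable, ?_⟩, hbound⟩
  exact lt_of_le_of_lt hbound ENNReal.ofReal_lt_top
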